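/- The maps $\phi_n:M\to M_n$ defined by $\phi_n=(r_n|_{M_n})^{-1}\circ T_{s_n}\circ r_n$ are well-defined retractions onto $M_n$ satisfying $\phi_n\circ\phi_m=\phi_{\min(m,n)}$ for all $m,n\in\mathbb N$, and every $\phi_n$ is $(3\lambda+2)$-Lipschitz. -/

import Mathlib

open Set

noncomputable section

variable {Γ : Type*} [TopologicalSpace Γ] [DiscreteTopology Γ]

/-- `ℓ∞(Γ)`: the Banach space of bounded real functions on `Γ`
(carrying the discrete topology, so that boundedness is the only constraint). -/
abbrev Linf (Γ : Type*) [TopologicalSpace Γ] [DiscreteTopology Γ] : Type _ :=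
  BoundedContinuousFunction Γ ℝ

/-- The entire part of a real number, toward `0`: `[r] = sign(r)⌊|r|⌋`. -/
def ent (r : ℝ) : ℝ := Real.sign r * ⌊|r|⌋

lemma abs_ent_le (r : ℝ) : |ent r| ≤ |r| := by
  have hsign : |Real.sign r| ≤ 1 := by
    rcases lt_trichotomy r 0 with h | h | h
    · rw [Real.sign_of_neg h]; norm_num
    · rw [h, Real.sign_zero]; norm_num
    · rw [Real.sign_of_pos h]; norm_num
  have hfl : |(⌊|r|⌋ : ℝ)| ≤ |r| := by
    rw [abs_of_nonneg (by exact_mod_cast Int.floor_nonneg.mpr (abs_nonneg r))]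
    exact Int.floor_le _
  calc |ent r| = |Real.sign r| * |(⌊|r|⌋ : ℝ)| := abs_mul _ _
    _ ≤ 1 * |r| := mul_le_mul hsign hfl (abs_nonneg _) zero_le_one
    _ = |r| := one_mul _

/-- The coordinatewise quantization `f : ℓ∞(S) → ℓ∞(S)`, `f(x)(γ) = [x(γ)]`. -/
def quant (x : Linf Γ) : Linf Γ :=
  BoundedContinuousFunction.ofNormedAddCommGroup (fun γ => ent (x γ))
    continuous_of_discreteTopology ‖x‖ (fun γ => by
      rw [Real.norm_eq_abs]
      exact (abs_ent_le (x γ)).trans (by simpa using x.norm_coe_le_norm γ))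

/-- Scalar truncation at level `s`. -/
def truncFun (s t : ℝ) : ℝ := if |t| ≤ s then t else s * t / |t|

lemma abs_truncFun_le (s t : ℝ) : |truncFun s t| ≤ max |s| |t| := by
  unfold truncFun
  split_ifs with h
  · exact le_max_right _ _
  · by_cases ht : t = 0
    · simp [ht]
    · have hst : abs (s * t / |t|) = |s| := by
        rw [abs_div, abs_mul, abs_abs, mul_div_assoc, div_self (abs_ne_zero.mpr ht), mul_one]
      rw [hst]; exact le_max_left _ _

/-- The truncation of radius `s`: `T_s(x)(γ) = x(γ)` if `|x(γ)| ≤ s`,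
and `= s·x(γ)/|x(γ)|` otherwise. -/
def trunc (s : ℝ) (x : Linf Γ) : Linf Γ :=
  BoundedContinuousFunction.ofNormedAddCommGroup (fun γ => truncFun s (x γ))
    continuous_of_discreteTopology (max |s| ‖x‖) (fun γ => by
      rw [Real.norm_eq_abs]
      exact (abs_truncFun_le s (x γ)).trans
        (max_le_max le_rfl (by simpa using x.norm_coe_le_norm γ)))

/-- The restriction operator `r_S : ℓ∞(Γ) → ℓ∞(S)`, where `ℓ∞(S)` is identified
isometrically with the subspace of `ℓ∞(Γ)` of functions vanishing off `S`. -/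
def restr (S : Set Γ) (x : Linf Γ) : Linf Γ :=
  BoundedContinuousFunction.ofNormedAddCommGroup (S.indicator x)
    continuous_of_discreteTopology ‖x‖ (fun γ => by
      rw [Real.norm_eq_abs]
      by_cases h : γ ∈ S
      · rw [Set.indicator_of_mem h]
        simpa using x.norm_coe_le_norm γ
      · rw [Set.indicator_of_notMem h]
        simp)

/-- The ball `s·B_{ℓ∞(S)}`, viewed inside `ℓ∞(Γ)`: functions supported on `S`
of norm at most `s`. -/
def suppBall (S : Set Γ) (s : ℝ) : Set (Linf Γ) :=
  {x | (∀ γ ∉ S, x γ = 0) ∧ ‖x‖ ≤ s}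

/-- `chain T a b = T (a+1) ∘ ⋯ ∘ T b` (the identity if `b ≤ a`). -/
def chain {α : Type*} (T : ℕ → α → α) (a b : ℕ) : α → α :=
  Nat.rec id (fun k ih => ih ∘ T (a + k + 1)) (b - a)

/-- Bourgain–Delbaen data on `Γ`: a strictly increasing sequence of nonempty finite
sets `Γs n` (for `n ≥ 1`) with union `Γ`, together with compatible bounded linear
extension operators `i n : ℓ∞(Γ_n) → ℓ∞(Γ)` (realized as operators on `ℓ∞(Γ)`
factoring through the restriction `restr (Γs n)`), with norms bounded by the
positive integer `lam`. -/
structure BD (Γ : Type*) [TopologicalSpace Γ] [DiscreteTopology Γ] where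
  Γs : ℕ → Set Γ
  lam : ℕ
  i : ℕ → Linf Γ →L[ℝ] Linf Γ
  one_le_lam : 1 ≤ lam
  finite : ∀ n, 1 ≤ n → (Γs n).Finite
  nonempty : ∀ n, 1 ≤ n → (Γs n).Nonempty
  ssubset : ∀ n, 1 ≤ n → Γs n ⊂ Γs (n + 1)
  iUnion_eq : ⋃ n ∈ {k : ℕ | 1 ≤ k}, Γs n = Set.univ
  extension : ∀ n, 1 ≤ n → ∀ x : Linf Γ, ∀ γ ∈ Γs n, i n x γ = x γ
  factor : ∀ n, 1 ≤ n → ∀ x : Linf Γ, i n (restr (Γs n) x) = i n x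
  compatible : ∀ n m, 1 ≤ n → n < m → ∀ x : Linf Γ, i m (restr (Γs m) (i n x)) = i n x
  norm_i_le : ∀ n, 1 ≤ n → ‖i n‖ ≤ (lam : ℝ)

namespace BD

/-- `s n = λ^n`. -/
def s (B : BD Γ) (n : ℕ) : ℝ := (B.lam : ℝ) ^ n

/-- The sets `M_n` (with `M_0 = ∅`):
`M_n = M_{n-1} ∪ (f ∘ i_n)(f(s_n B_{ℓ∞(Γ_n)}) \ r_n(M_{n-1}))`. -/
def M (B : BD Γ) : ℕ → Set (Linf Γ)
  | 0 => ∅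
  | n + 1 =>
      M B n ∪
        (fun z => quant (B.i (n + 1) z)) ''
          (quant '' suppBall (B.Γs (n + 1)) (B.s (n + 1)) \ restr (B.Γs (n + 1)) '' M B n)

/-- `M = ⋃ n, M_n`. -/
def Mtot (B : BD Γ) : Set (Linf Γ) := ⋃ n, B.M n

/-- `C_n = (f ∘ i_{n+1} ∘ f ∘ T_{s_{n+1}} ∘ r_{n+1} ∘ i_n)
(f(s_{n+1}B_{ℓ∞(Γ_n)}) \ f(s_n B_{ℓ∞(Γ_n)}))`. -/
def C (B : BD Γ) (n : ℕ) : Set (Linf Γ) :=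
  (fun z => quant (B.i (n + 1) (quant (trunc (B.s (n + 1)) (restr (B.Γs (n + 1)) (B.i n z)))))) ''
    (quant '' suppBall (B.Γs n) (B.s (n + 1)) \ quant '' suppBall (B.Γs n) (B.s n))

/-- `D_n = M_n ∪ C_n`. -/
def D (B : BD Γ) (n : ℕ) : Set (Linf Γ) := B.M n ∪ B.C n

end BD

-- scalar lemmas
section Scalar

lemma ent_intCast (k : ℤ) : ent (k : ℝ) = k := by
  unfold ent
  have habs : |((k:ℝ))| = ((|k| : ℤ) : ℝ) := by push_cast; rfl
  rw [habs, Int.floor_intCast]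
  rcases lt_trichotomy k 0 with h | h | h
  · rw [Real.sign_of_neg (by exact_mod_cast h)]
    rw [abs_of_neg h]; push_cast; ring
  · simp [h]
  · rw [Real.sign_of_pos (by exact_mod_cast h)]
    rw [abs_of_pos h]; ring

lemma ent_isInt (r : ℝ) : ∃ k : ℤ, ent r = k := by
  unfold ent
  rcases lt_trichotomy r 0 with h | h | h
  · exact ⟨-⌊|r|⌋, by rw [Real.sign_of_neg h]; push_cast [neg_mul]; ring⟩
  · exact ⟨0, by simp [h]⟩
  · exact ⟨⌊|r|⌋, by rw [Real.sign_of_pos h]; ring⟩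

lemma abs_ent_sub_le (r : ℝ) : |ent r - r| ≤ 1 := by
  unfold ent
  rcases lt_trichotomy r 0 with h | h | h
  · rw [Real.sign_of_neg h, abs_of_neg h]
    have h1 := Int.floor_le (-r)
    have h2 := Int.lt_floor_add_one (-r)
    rw [abs_le]; constructor <;> nlinarith
  · simp [h]
  · rw [Real.sign_of_pos h, abs_of_pos h]
    have h1 := Int.floor_le r
    have h2 := Int.lt_floor_add_one r
    rw [abs_le]; constructor <;> nlinarith

lemma ent_zero : ent 0 = 0 := by simpa using ent_intCast 0

lemma truncFun_eq_clamp {s : ℝ} (hs : 0 ≤ s) (t : ℝ) :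
    truncFun s t = max (-s) (min s t) := by
  unfold truncFun
  split_ifs with h
  · rw [abs_le] at h
    rw [min_eq_right h.2, max_eq_right h.1]
  · push_neg at h
    have ht0 : t ≠ 0 := by
      intro h0; rw [h0, abs_zero] at h; linarith
    rcases lt_trichotomy t 0 with hneg | h0 | hpos
    · rw [abs_of_neg hneg] at h ⊢
      have : s * t / -t = -s := by rw [div_neg, mul_div_assoc, div_self ht0, mul_one]
      rw [this, min_eq_right (by linarith), max_eq_left (by linarith)]
    · exact absurd h0 ht0
    · rw [abs_of_pos hpos] at h ⊢
      have : s * t / t = s := by rw [mul_div_assoc, div_self ht0, mul_one]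
      rw [this, min_eq_left (by linarith), max_eq_right (by linarith)]

lemma truncFun_lipschitz {s : ℝ} (hs : 0 ≤ s) (a b : ℝ) :
    |truncFun s a - truncFun s b| ≤ |a - b| := by
  rw [truncFun_eq_clamp hs, truncFun_eq_clamp hs]
  calc |max (-s) (min s a) - max (-s) (min s b)|
      ≤ max |(-s) - (-s)| |min s a - min s b| := abs_max_sub_max_le_max _ _ _ _
    _ ≤ |a - b| := by
        rw [sub_self, abs_zero]
        refine max_le (abs_nonneg _) ?_
        calc |min s a - min s b| ≤ max |s - s| |a - b| := abs_min_sub_min_le_max _ _ _ _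
          _ ≤ |a - b| := by rw [sub_self, abs_zero]; exact max_le (abs_nonneg _) le_rfl

lemma truncFun_eq_self {s t : ℝ} (h : |t| ≤ s) : truncFun s t = t := if_pos h

lemma abs_truncFun_le' {s : ℝ} (hs : 0 ≤ s) (t : ℝ) : |truncFun s t| ≤ s := by
  rw [truncFun_eq_clamp hs, abs_le]
  constructor
  · exact le_max_left _ _
  · exact max_le (by linarith) (min_le_left _ _)

lemma truncFun_zero {s : ℝ} (hs : 0 ≤ s) : truncFun s 0 = 0 :=
  truncFun_eq_self (by simpa using hs)

lemma truncFun_idem {a b : ℝ} (ha : 0 ≤ a) (hab : a ≤ b) (t : ℝ) :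
    truncFun a (truncFun b t) = truncFun a t := by
  have hb : (0:ℝ) ≤ b := le_trans ha hab
  rw [truncFun_eq_clamp hb, truncFun_eq_clamp ha, truncFun_eq_clamp ha]
  rcases le_total t (-b) with h1 | h1
  · have e1 : min b t = t := min_eq_right (by linarith)
    have e2 : max (-b) t = -b := max_eq_left (by linarith)
    have e3 : min a (-b) = -b := min_eq_right (by linarith)
    have e4 : max (-a) (-b) = -a := max_eq_left (by linarith)
    have e5 : min a t = t := min_eq_right (by linarith)
    have e6 : max (-a) t = -a := max_eq_left (by linarith)
    rw [e1, e2, e3, e4, e5, e6]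
  rcases le_total b t with h2 | h2
  · have e1 : min b t = b := min_eq_left h2
    have e2 : max (-b) b = b := max_eq_right (by linarith)
    have e3 : min a b = a := min_eq_left hab
    have e4 : max (-a) a = a := max_eq_right (by linarith)
    have e5 : min a t = a := min_eq_left (by linarith)
    rw [e1, e2, e3, e4, e5, e4]
  · rw [min_eq_right h2, max_eq_right h1]

lemma truncFun_isInt {s t : ℝ} (hs0 : 0 ≤ s) (hs : ∃ j : ℤ, s = j) (ht : ∃ j : ℤ, t = j) :
    ∃ j : ℤ, truncFun s t = j := by
  obtain ⟨js, rfl⟩ := hs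
  obtain ⟨jt, rfl⟩ := ht
  refine ⟨max (-js) (min js jt), ?_⟩
  rw [truncFun_eq_clamp hs0]
  push_cast
  rfl

end Scalar
section Fn

variable {Γ : Type*} [TopologicalSpace Γ] [DiscreteTopology Γ]

lemma quant_apply (x : Linf Γ) (γ : Γ) : quant x γ = ent (x γ) := rfl

lemma restr_apply (S : Set Γ) (x : Linf Γ) (γ : Γ) : restr S x γ = S.indicator x γ := rfl

lemma trunc_apply (s : ℝ) (x : Linf Γ) (γ : Γ) : trunc s x γ = truncFun s (x γ) := rfl

lemma linf_norm_le {x : Linf Γ} {C : ℝ} (hC : 0 ≤ C) (h : ∀ γ, |x γ| ≤ C) : ‖x‖ ≤ C :=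
  (BoundedContinuousFunction.norm_le hC).2 (fun γ => by rw [Real.norm_eq_abs]; exact h γ)

lemma linf_abs_le_norm (x : Linf Γ) (γ : Γ) : |x γ| ≤ ‖x‖ := by
  simpa [Real.norm_eq_abs] using x.norm_coe_le_norm γ

lemma norm_quant_sub_le (x : Linf Γ) : ‖quant x - x‖ ≤ 1 :=
  linf_norm_le zero_le_one (fun γ => by
    simpa [quant_apply] using abs_ent_sub_le (x γ))

lemma quant_eq_self {x : Linf Γ} (h : ∀ γ, ∃ k : ℤ, x γ = k) : quant x = x := by
  ext γ
  obtain ⟨k, hk⟩ := h γ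
  rw [quant_apply, hk, ent_intCast]

lemma restr_restr_of_subset {S T : Set Γ} (h : S ⊆ T) (x : Linf Γ) :
    restr S (restr T x) = restr S x := by
  ext γ
  by_cases hγ : γ ∈ S
  · rw [restr_apply, restr_apply, Set.indicator_of_mem hγ, Set.indicator_of_mem hγ,
      restr_apply, Set.indicator_of_mem (h hγ)]
  · rw [restr_apply, restr_apply, Set.indicator_of_notMem hγ, Set.indicator_of_notMem hγ]

lemma restr_eq_self {S : Set Γ} {x : Linf Γ} (h : ∀ γ ∉ S, x γ = 0) : restr S x = x := by
  ext γ
  rw [restr_apply]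
  by_cases hγ : γ ∈ S
  · rw [Set.indicator_of_mem hγ]
  · rw [Set.indicator_of_notMem hγ, h γ hγ]

namespace BD

variable (B : BD Γ)

lemma lam_pos : (0:ℝ) < (B.lam : ℝ) := by exact_mod_cast B.one_le_lam
lemma one_le_lamR : (1:ℝ) ≤ (B.lam : ℝ) := by exact_mod_cast B.one_le_lam

lemma s_pos (n : ℕ) : 0 < B.s n := pow_pos B.lam_pos n
lemma one_le_s (n : ℕ) : 1 ≤ B.s n := one_le_pow₀ B.one_le_lamR
lemma s_mono {m n : ℕ} (h : m ≤ n) : B.s m ≤ B.s n :=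
  pow_le_pow_right₀ B.one_le_lamR h
lemma s_isInt (n : ℕ) : ∃ j : ℤ, B.s n = j := ⟨(B.lam : ℤ) ^ n, by unfold s; push_cast; ring⟩

lemma Γs_mono {m n : ℕ} (hm : 1 ≤ m) (h : m ≤ n) : B.Γs m ⊆ B.Γs n := by
  induction n, h using Nat.le_induction with
  | base => exact subset_rfl
  | succ k hk ih => exact ih.trans (B.ssubset k (le_trans hm hk)).subset

lemma M_mono {m n : ℕ} (h : m ≤ n) : B.M m ⊆ B.M n := by
  induction n, h using Nat.le_induction with
  | base => exact subset_rfl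
  | succ k hk ih => exact ih.trans (fun x hx => Or.inl hx)

/-- Structure of elements of `M n`. -/
lemma M_struct : ∀ n, ∀ w ∈ B.M n, ∃ k, 1 ≤ k ∧ k ≤ n ∧ ∃ z : Linf Γ,
    (∀ γ ∉ B.Γs k, z γ = 0) ∧ ‖z‖ ≤ B.s k ∧ (∀ γ, ∃ j : ℤ, z γ = j) ∧
    w = quant (B.i k z) := by
  intro n
  induction n with
  | zero => intro w hw; exact absurd hw (by simp [M])
  | succ n ih =>
    intro w hw
    rcases hw with hw | hw
    · obtain ⟨k, hk1, hk2, hz⟩ := ih w hw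
      exact ⟨k, hk1, hk2.trans (Nat.le_succ n), hz⟩
    · obtain ⟨z, hz, rfl⟩ := hw
      obtain ⟨⟨z0, hz0, rfl⟩, -⟩ := hz
      refine ⟨n + 1, Nat.succ_le_succ (Nat.zero_le n), le_rfl, quant z0, ?_, ?_, ?_, rfl⟩
      · intro γ hγ
        rw [quant_apply, hz0.1 γ hγ, ent_zero]
      · exact linf_norm_le (le_of_lt (B.s_pos _))
          (fun γ => (abs_ent_le (z0 γ)).trans ((linf_abs_le_norm z0 γ).trans hz0.2))
      · intro γ; exact ent_isInt (z0 γ)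

lemma M_isInt {n : ℕ} {w : Linf Γ} (hw : w ∈ B.M n) : ∀ γ, ∃ j : ℤ, w γ = j := by
  obtain ⟨k, -, -, z, -, -, -, rfl⟩ := B.M_struct n w hw
  intro γ; exact ent_isInt _

lemma Mtot_isInt {w : Linf Γ} (hw : w ∈ B.Mtot) : ∀ γ, ∃ j : ℤ, w γ = j := by
  obtain ⟨-, ⟨n, rfl⟩, hn⟩ := hw
  exact B.M_isInt hn

lemma restr_quant_i {n : ℕ} (hn : 1 ≤ n) {z : Linf Γ} (h0 : ∀ γ ∉ B.Γs n, z γ = 0)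
    (hi : ∀ γ, ∃ j : ℤ, z γ = j) : restr (B.Γs n) (quant (B.i n z)) = z := by
  ext γ
  rw [restr_apply]
  by_cases hγ : γ ∈ B.Γs n
  · rw [Set.indicator_of_mem hγ, quant_apply, B.extension n hn z γ hγ]
    obtain ⟨j, hj⟩ := hi γ
    rw [hj, ent_intCast]
  · rw [Set.indicator_of_notMem hγ, h0 γ hγ]

/-- Values of elements of `M n` on `Γs n` are bounded by `s n`. -/
lemma abs_M_le {n : ℕ} {w : Linf Γ} (hw : w ∈ B.M n) :
    ∀ γ ∈ B.Γs n, |w γ| ≤ B.s n := by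
  obtain ⟨k, hk1, hk2, z, h0, hz, hi, rfl⟩ := B.M_struct n w hw
  intro γ hγ
  by_cases hγk : γ ∈ B.Γs k
  · rw [quant_apply, B.extension k hk1 z γ hγk]
    obtain ⟨j, hj⟩ := hi γ
    rw [hj, ent_intCast, ← hj]
    exact (linf_abs_le_norm z γ).trans (hz.trans (B.s_mono hk2))
  · have hkn : k < n := by
      rcases lt_or_eq_of_le hk2 with h | h
      · exact h
      · exact absurd (h ▸ hγ) hγk
    calc |quant (B.i k z) γ| ≤ |B.i k z γ| := by rw [quant_apply]; exact abs_ent_le _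
      _ ≤ ‖B.i k z‖ := linf_abs_le_norm _ γ
      _ ≤ ‖B.i k‖ * ‖z‖ := (B.i k).le_opNorm z
      _ ≤ (B.lam : ℝ) * B.s k := by
          apply mul_le_mul (B.norm_i_le k hk1) hz (norm_nonneg _)
          exact le_of_lt B.lam_pos
      _ = B.s (k + 1) := by unfold s; ring
      _ ≤ B.s n := B.s_mono hkn

lemma norm_restr_M_le {n : ℕ} {w : Linf Γ} (hw : w ∈ B.M n) :
    ‖restr (B.Γs n) w‖ ≤ B.s n := by
  refine linf_norm_le (le_of_lt (B.s_pos n)) (fun γ => ?_)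
  rw [restr_apply]
  by_cases hγ : γ ∈ B.Γs n
  · rw [Set.indicator_of_mem hγ]; exact B.abs_M_le hw γ hγ
  · rw [Set.indicator_of_notMem hγ]
    simpa using le_of_lt (B.s_pos n)

/-- Key estimate: `‖w - i_n (r_n w)‖ ≤ 1 + λ` for `w ∈ M_n`. -/
lemma norm_sub_i_restr_le {n : ℕ} (hn : 1 ≤ n) {w : Linf Γ} (hw : w ∈ B.M n) :
    ‖w - B.i n (restr (B.Γs n) w)‖ ≤ 1 + (B.lam : ℝ) := by
  obtain ⟨k, hk1, hk2, z, h0, hz, hi, rfl⟩ := B.M_struct n w hw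
  set u := restr (B.Γs n) (B.i k z) with hu
  have hcomp : B.i n u = B.i k z := by
    rcases lt_or_eq_of_le hk2 with h | h
    · exact B.compatible k n hk1 h z
    · subst h
      have : u = restr (B.Γs k) z := by
        ext γ
        rw [hu, restr_apply, restr_apply]
        by_cases hγ : γ ∈ B.Γs k
        · rw [Set.indicator_of_mem hγ, Set.indicator_of_mem hγ, B.extension k hk1 z γ hγ]
        · rw [Set.indicator_of_notMem hγ, Set.indicator_of_notMem hγ]
      rw [this, B.factor k hk1 z]
  have hrq : restr (B.Γs n) (quant (B.i k z)) = quant u := by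
    ext γ
    rw [restr_apply, quant_apply, hu, restr_apply]
    by_cases hγ : γ ∈ B.Γs n
    · rw [Set.indicator_of_mem hγ, Set.indicator_of_mem hγ, quant_apply]
    · rw [Set.indicator_of_notMem hγ, Set.indicator_of_notMem hγ, ent_zero]
  calc ‖quant (B.i k z) - B.i n (restr (B.Γs n) (quant (B.i k z)))‖
      = ‖(quant (B.i k z) - B.i k z) + (B.i n u - B.i n (quant u))‖ := by
        rw [hrq, hcomp]; ring_nf
    _ ≤ ‖quant (B.i k z) - B.i k z‖ + ‖B.i n u - B.i n (quant u)‖ := norm_add_le _ _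
    _ ≤ 1 + (B.lam : ℝ) := by
        refine add_le_add (norm_quant_sub_le _) ?_
        rw [← map_sub]
        calc ‖B.i n (u - quant u)‖ ≤ ‖B.i n‖ * ‖u - quant u‖ := (B.i n).le_opNorm _
          _ ≤ (B.lam : ℝ) * 1 := by
              apply mul_le_mul (B.norm_i_le n hn) ?_ (norm_nonneg _) (le_of_lt B.lam_pos)
              rw [← norm_neg]; simpa using norm_quant_sub_le u
          _ = (B.lam : ℝ) := mul_one _

/-- `r_n` is injective on `M_n`. -/
lemma M_inj : ∀ n, ∀ w ∈ B.M n, ∀ w' ∈ B.M n,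
    restr (B.Γs n) w = restr (B.Γs n) w' → w = w' := by
  intro n
  induction n with
  | zero => intro w hw; exact absurd hw (by simp [M])
  | succ n ih =>
    have key : ∀ z ∈ quant '' suppBall (B.Γs (n+1)) (B.s (n+1)) \
        restr (B.Γs (n+1)) '' B.M n,
        restr (B.Γs (n+1)) (quant (B.i (n+1) z)) = z := by
      rintro z ⟨⟨z0, hz0, rfl⟩, -⟩
      refine B.restr_quant_i (Nat.succ_le_succ (Nat.zero_le n)) ?_ ?_
      · intro γ hγ; rw [quant_apply, hz0.1 γ hγ, ent_zero]
      · intro γ; exact ent_isInt _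
    intro w hw w' hw' hr
    rcases hw with hw | hw <;> rcases hw' with hw' | hw'
    · rcases Nat.eq_zero_or_pos n with rfl | hn1
      · exact absurd hw (by simp [M])
      · apply ih w hw w' hw'
        have hsub : B.Γs n ⊆ B.Γs (n+1) := (B.ssubset n hn1).subset
        rw [← restr_restr_of_subset hsub w, ← restr_restr_of_subset hsub w', hr]
    · obtain ⟨z, hz, rfl⟩ := hw'
      have hmem : z ∈ restr (B.Γs (n+1)) '' B.M n := by
        rw [← key z hz, ← hr]; exact Set.mem_image_of_mem _ hw
      exact absurd hmem hz.2
    · obtain ⟨z, hz, rfl⟩ := hw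
      have hmem : z ∈ restr (B.Γs (n+1)) '' B.M n := by
        rw [← key z hz, hr]; exact Set.mem_image_of_mem _ hw'
      exact absurd hmem hz.2
    · obtain ⟨z, hz, rfl⟩ := hw
      obtain ⟨z', hz', rfl⟩ := hw'
      have hzz : z = z' := by rw [← key z hz, ← key z' hz', hr]
      rw [hzz]

/-- `r_n : M_n → f(s_n B)` is surjective. -/
lemma M_surj {n : ℕ} (hn : 1 ≤ n) {z : Linf Γ} (h0 : ∀ γ ∉ B.Γs n, z γ = 0)
    (hi : ∀ γ, ∃ j : ℤ, z γ = j) (hz : ‖z‖ ≤ B.s n) :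
    ∃ w ∈ B.M n, restr (B.Γs n) w = z := by
  obtain ⟨m, rfl⟩ : ∃ m, n = m + 1 := ⟨n - 1, by omega⟩
  by_cases hmem : z ∈ restr (B.Γs (m+1)) '' B.M m
  · obtain ⟨w, hw, hwz⟩ := hmem
    exact ⟨w, Or.inl hw, hwz⟩
  · refine ⟨quant (B.i (m+1) z), ?_, B.restr_quant_i (Nat.succ_le_succ (Nat.zero_le m)) h0 hi⟩
    exact Or.inr ⟨z, ⟨⟨z, ⟨h0, hz⟩, quant_eq_self hi⟩, hmem⟩, rfl⟩

end BD

end Fn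
section Phi

variable {Γ : Type*} [TopologicalSpace Γ] [DiscreteTopology Γ]

namespace BD

variable (B : BD Γ)

open Classical in
/-- The retraction `φ_n = (r_n|_{M_n})⁻¹ ∘ T_{s_n} ∘ r_n`. -/
def phiAux (n : ℕ) (x : Linf Γ) : Linf Γ :=
  if h : ∃ w, w ∈ B.M n ∧ restr (B.Γs n) w = trunc (B.s n) (restr (B.Γs n) x)
  then h.choose else x

lemma phiAux_spec {n : ℕ} {x : Linf Γ}
    (h : ∃ w, w ∈ B.M n ∧ restr (B.Γs n) w = trunc (B.s n) (restr (B.Γs n) x)) :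
    B.phiAux n x ∈ B.M n ∧
      restr (B.Γs n) (B.phiAux n x) = trunc (B.s n) (restr (B.Γs n) x) := by
  rw [phiAux, dif_pos h]
  exact h.choose_spec

lemma mem_Mtot {n : ℕ} {x : Linf Γ} (hx : x ∈ B.M n) : x ∈ B.Mtot :=
  Set.mem_iUnion.2 ⟨n, hx⟩

lemma phi_exists {n : ℕ} (hn : 1 ≤ n) {x : Linf Γ} (hx : x ∈ B.Mtot) :
    ∃ w, w ∈ B.M n ∧ restr (B.Γs n) w = trunc (B.s n) (restr (B.Γs n) x) := by
  set z := trunc (B.s n) (restr (B.Γs n) x) with hz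
  have hs0 : (0:ℝ) ≤ B.s n := (B.s_pos n).le
  have hz0 : ∀ γ ∉ B.Γs n, z γ = 0 := by
    intro γ hγ
    rw [hz, trunc_apply, restr_apply, Set.indicator_of_notMem hγ, truncFun_zero hs0]
  have hzi : ∀ γ, ∃ j : ℤ, z γ = j := by
    intro γ
    rw [hz, trunc_apply]
    apply truncFun_isInt hs0 (B.s_isInt n)
    rw [restr_apply]
    by_cases hγ : γ ∈ B.Γs n
    · rw [Set.indicator_of_mem hγ]; exact B.Mtot_isInt hx γ
    · rw [Set.indicator_of_notMem hγ]; exact ⟨0, by simp⟩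
  have hzn : ‖z‖ ≤ B.s n :=
    linf_norm_le hs0 (fun γ => by rw [hz, trunc_apply]; exact abs_truncFun_le' hs0 _)
  obtain ⟨w, hw, hwz⟩ := B.M_surj hn hz0 hzi hzn
  exact ⟨w, hw, hwz⟩

lemma phi_wd {n : ℕ} (hn : 1 ≤ n) {x : Linf Γ} (hx : x ∈ B.Mtot) :
    B.phiAux n x ∈ B.M n ∧
      restr (B.Γs n) (B.phiAux n x) = trunc (B.s n) (restr (B.Γs n) x) :=
  B.phiAux_spec (B.phi_exists hn hx)

lemma trunc_restr_of_mem {n : ℕ} {x : Linf Γ} (hx : x ∈ B.M n) :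
    trunc (B.s n) (restr (B.Γs n) x) = restr (B.Γs n) x := by
  ext γ
  rw [trunc_apply]
  exact truncFun_eq_self ((linf_abs_le_norm _ γ).trans (B.norm_restr_M_le hx))

lemma phi_fix {n : ℕ} (hn : 1 ≤ n) {x : Linf Γ} (hx : x ∈ B.M n) :
    B.phiAux n x = x := by
  obtain ⟨h1, h2⟩ := B.phi_wd hn (B.mem_Mtot hx)
  apply B.M_inj n _ h1 x hx
  rw [h2, B.trunc_restr_of_mem hx]

lemma phi_comp {m n : ℕ} (hm : 1 ≤ m) (hn : 1 ≤ n) {x : Linf Γ} (hx : x ∈ B.Mtot) :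
    B.phiAux n (B.phiAux m x) = B.phiAux (min m n) x := by
  rcases le_or_gt m n with h | h
  · rw [min_eq_left h]
    exact B.phi_fix hn (B.M_mono h (B.phi_wd hm hx).1)
  · rw [min_eq_right h.le]
    obtain ⟨hu1, hu2⟩ := B.phi_wd hm hx
    set u := B.phiAux m x with hu
    have huM : u ∈ B.Mtot := B.mem_Mtot hu1
    obtain ⟨h1, h2⟩ := B.phi_wd hn huM
    obtain ⟨h1', h2'⟩ := B.phi_wd hn hx
    apply B.M_inj n _ h1 _ h1'
    rw [h2, h2']
    ext γ
    rw [trunc_apply, trunc_apply]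
    by_cases hγ : γ ∈ B.Γs n
    · have hγm : γ ∈ B.Γs m := B.Γs_mono hn h.le hγ
      have : restr (B.Γs n) u γ = truncFun (B.s m) (x γ) := by
        rw [restr_apply, Set.indicator_of_mem hγ]
        have := congrArg (fun f : Linf Γ => f γ) hu2
        simpa [restr_apply, trunc_apply, Set.indicator_of_mem hγm] using this
      rw [this, restr_apply, Set.indicator_of_mem hγ,
        truncFun_idem (B.s_pos n).le (B.s_mono h.le) (x γ)]
    · rw [restr_apply, restr_apply, Set.indicator_of_notMem hγ, Set.indicator_of_notMem hγ]

lemma phi_lip {n : ℕ} (hn : 1 ≤ n) {x : Linf Γ} (hx : x ∈ B.Mtot) {y : Linf Γ}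
    (hy : y ∈ B.Mtot) :
    ‖B.phiAux n x - B.phiAux n y‖ ≤ (3 * (B.lam : ℝ) + 2) * ‖x - y‖ := by
  obtain ⟨hu1, hu2⟩ := B.phi_wd hn hx
  obtain ⟨hv1, hv2⟩ := B.phi_wd hn hy
  set u := B.phiAux n x with hu
  set v := B.phiAux n y with hv
  have hlam0 : (0:ℝ) ≤ (B.lam : ℝ) := B.lam_pos.le
  by_cases huv : u = v
  · rw [huv, sub_self, norm_zero]
    exact mul_nonneg (by linarith) (norm_nonneg _)
  · set d := ‖restr (B.Γs n) u - restr (B.Γs n) v‖ with hd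
    have hrne : restr (B.Γs n) u ≠ restr (B.Γs n) v :=
      fun h => huv (B.M_inj n u hu1 v hv1 h)
    -- d ≥ 1
    have hd1 : 1 ≤ d := by
      have : ∃ γ, restr (B.Γs n) u γ ≠ restr (B.Γs n) v γ := by
        by_contra hc
        push_neg at hc
        exact hrne (by ext γ; exact hc γ)
      obtain ⟨γ, hγ⟩ := this
      have hint : ∀ w : Linf Γ, (∀ δ, ∃ j : ℤ, w δ = j) → ∃ j : ℤ, restr (B.Γs n) w γ = j := by
        intro w hw
        rw [restr_apply]
        by_cases hγ' : γ ∈ B.Γs n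
        · rw [Set.indicator_of_mem hγ']; exact hw γ
        · rw [Set.indicator_of_notMem hγ']; exact ⟨0, by simp⟩
      obtain ⟨j1, hj1⟩ := hint u (B.M_isInt hu1)
      obtain ⟨j2, hj2⟩ := hint v (B.M_isInt hv1)
      have hjne : j1 ≠ j2 := by
        intro hj; apply hγ; rw [hj1, hj2, hj]
      have : (1:ℝ) ≤ |restr (B.Γs n) u γ - restr (B.Γs n) v γ| := by
        rw [hj1, hj2]
        have h1 : (1:ℤ) ≤ |j1 - j2| := Int.one_le_abs (sub_ne_zero.2 hjne)
        calc (1:ℝ) = ((1:ℤ):ℝ) := by norm_num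
          _ ≤ ((|j1 - j2| : ℤ) : ℝ) := by exact_mod_cast h1
          _ = |((j1:ℝ)) - (j2:ℝ)| := by push_cast; ring
      calc (1:ℝ) ≤ |restr (B.Γs n) u γ - restr (B.Γs n) v γ| := this
        _ = |(restr (B.Γs n) u - restr (B.Γs n) v) γ| := by
            simp [BoundedContinuousFunction.coe_sub]
        _ ≤ d := linf_abs_le_norm _ γ
    -- ‖u - v‖ ≤ (2 + 2λ) + λ d
    have hub : ‖u - v‖ ≤ (2 + 2 * (B.lam : ℝ)) + (B.lam : ℝ) * d := by
      have e : u - v = ((u - B.i n (restr (B.Γs n) u)) - (v - B.i n (restr (B.Γs n) v)))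
          + B.i n (restr (B.Γs n) u - restr (B.Γs n) v) := by
        rw [map_sub]; abel
      calc ‖u - v‖
          ≤ ‖(u - B.i n (restr (B.Γs n) u)) - (v - B.i n (restr (B.Γs n) v))‖
            + ‖B.i n (restr (B.Γs n) u - restr (B.Γs n) v)‖ := by
            rw [e]; exact norm_add_le _ _
        _ ≤ (‖u - B.i n (restr (B.Γs n) u)‖ + ‖v - B.i n (restr (B.Γs n) v)‖)
            + (B.lam : ℝ) * d := by
            refine add_le_add (norm_sub_le _ _) ?_
            calc ‖B.i n (restr (B.Γs n) u - restr (B.Γs n) v)‖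
                ≤ ‖B.i n‖ * d := (B.i n).le_opNorm _
              _ ≤ (B.lam : ℝ) * d :=
                  mul_le_mul_of_nonneg_right (B.norm_i_le n hn) (norm_nonneg _)
        _ ≤ ((1 + (B.lam : ℝ)) + (1 + (B.lam : ℝ))) + (B.lam : ℝ) * d := by
            refine add_le_add (add_le_add ?_ ?_) le_rfl
            · exact B.norm_sub_i_restr_le hn hu1
            · exact B.norm_sub_i_restr_le hn hv1
        _ = (2 + 2 * (B.lam : ℝ)) + (B.lam : ℝ) * d := by ring
    -- d ≤ ‖x - y‖
    have hdxy : d ≤ ‖x - y‖ := by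
      rw [hd, hu2, hv2]
      refine linf_norm_le (norm_nonneg _) (fun γ => ?_)
      have e1 : (trunc (B.s n) (restr (B.Γs n) x) - trunc (B.s n) (restr (B.Γs n) y)) γ
          = truncFun (B.s n) (restr (B.Γs n) x γ) - truncFun (B.s n) (restr (B.Γs n) y γ) := by
        simp [BoundedContinuousFunction.coe_sub, trunc_apply]
      rw [e1]
      calc |truncFun (B.s n) (restr (B.Γs n) x γ) - truncFun (B.s n) (restr (B.Γs n) y γ)|
          ≤ |restr (B.Γs n) x γ - restr (B.Γs n) y γ| :=
            truncFun_lipschitz (B.s_pos n).le _ _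
        _ ≤ |x γ - y γ| := by
            rw [restr_apply, restr_apply]
            by_cases hγ : γ ∈ B.Γs n
            · rw [Set.indicator_of_mem hγ, Set.indicator_of_mem hγ]
            · rw [Set.indicator_of_notMem hγ, Set.indicator_of_notMem hγ]
              simp [abs_nonneg]
        _ ≤ ‖x - y‖ := by
            have := linf_abs_le_norm (x - y) γ
            simpa [BoundedContinuousFunction.coe_sub] using this
    calc ‖u - v‖ ≤ (2 + 2 * (B.lam : ℝ)) + (B.lam : ℝ) * d := hub
      _ ≤ (3 * (B.lam : ℝ) + 2) * d := by nlinarith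
      _ ≤ (3 * (B.lam : ℝ) + 2) * ‖x - y‖ :=
          mul_le_mul_of_nonneg_left hdxy (by linarith)

end BD

end Phi


/-- Proposition 4 (`globaldef`): the maps `φ_n = (r_n|_{M_n})⁻¹ ∘ T_{s_n} ∘ r_n`
are well-defined retractions of `M` onto `M_n` with `φ_n ∘ φ_m = φ_{min(m,n)}`,
and every `φ_n` is `(3λ+2)`-Lipschitz.  The defining formula is encoded by
`φ n x ∈ M_n` together with `r_n(φ n x) = T_{s_n}(r_n x)` (which determines
`φ n x` uniquely, `r_n` being injective on `M_n`). -/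
theorem phi_retractions (B : BD Γ) :
    ∃ φ : ℕ → Linf Γ → Linf Γ,
      (∀ n, 1 ≤ n → ∀ x ∈ B.Mtot, φ n x ∈ B.M n ∧
        restr (B.Γs n) (φ n x) = trunc (B.s n) (restr (B.Γs n) x)) ∧
      (∀ n, 1 ≤ n → ∀ x ∈ B.M n, φ n x = x) ∧
      (∀ m n, 1 ≤ m → 1 ≤ n → ∀ x ∈ B.Mtot, φ n (φ m x) = φ (min m n) x) ∧
      (∀ n, 1 ≤ n → ∀ x ∈ B.Mtot, ∀ y ∈ B.Mtot,
        ‖φ n x - φ n y‖ ≤ (3 * (B.lam : ℝ) + 2) * ‖x - y‖) := by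
  refine ⟨B.phiAux, ?_, ?_, ?_, ?_⟩
  · intro n hn x hx
    exact B.phi_wd hn hx
  · intro n hn x hx
    exact B.phi_fix hn hx
  · intro m n hm hn x hx
    exact B.phi_comp hm hn hx
  · intro n hn x hx y hy
    exact B.phi_lip hn hx hy
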